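/- Let H be a reproducing kernel Hilbert space on a set D with kernel K, let h ∈ H, and let α > 0. Then the squared worst-case error of every n-point quadrature rule for the functional S_h(f) = ⟨f,h⟩ is at least ‖h‖²_H − 1/α if and only if for every choice of points x_1,…,x_n ∈ D the n×n matrix with entries K(x_j,x_k) − α·conj(h(x_j))·h(x_k) is positive semi-definite. -/

import Mathlib

open scoped ComplexOrder

/-- Characterization of lower bounds for quadrature in an RKHS `H` on `D` with kernel `K`
(`rep x = K(x,·)`, so that `f(x) = ⟪rep x, f⟫` and `K x y = ⟪rep y, rep x⟫`):
for `α > 0`, the squared worst-case error of every `n`-point quadrature rule for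
`S_h(f) = ⟨f,h⟩` is at least `‖h‖² - 1/α` iff for all nodes `x₁,…,xₙ ∈ D` the matrix
`(K(x_j,x_k) - α conj(h(x_j)) h(x_k))` is positive semi-definite. -/
theorem quadrature_lower_bound_iff_posSemidef {D H : Type*} [Nonempty D]
    [NormedAddCommGroup H] [InnerProductSpace ℂ H] [CompleteSpace H]
    (K : D → D → ℂ) (rep : D → H)
    (hK : ∀ x y, K x y = (inner ℂ (rep y) (rep x) : ℂ))
    (h : H) (α : ℝ) (hα : 0 < α) (n : ℕ) :
    (‖h‖ ^ 2 - 1 / α ≤ ⨅ (x : Fin n → D) (a : Fin n → ℂ),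
        ‖(∑ k, (starRingEnd ℂ) (a k) • rep (x k)) - h‖ ^ 2) ↔
      ∀ x : Fin n → D, Matrix.PosSemidef (Matrix.of fun j k : Fin n =>
        K (x j) (x k) -
          (α : ℂ) * (starRingEnd ℂ) ((inner ℂ (rep (x j)) h : ℂ)) * (inner ℂ (rep (x k)) h : ℂ)) := by
  have key : ∀ x : Fin n → D,
      ((∀ a : Fin n → ℂ, ‖h‖ ^ 2 - 1 / α ≤
          ‖(∑ k, (starRingEnd ℂ) (a k) • rep (x k)) - h‖ ^ 2) ↔
        Matrix.PosSemidef (Matrix.of fun j k : Fin n =>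
          K (x j) (x k) -
            (α : ℂ) * (starRingEnd ℂ) ((inner ℂ (rep (x j)) h : ℂ)) *
              (inner ℂ (rep (x k)) h : ℂ))) := by
    intro x
    set M : Matrix (Fin n) (Fin n) ℂ := Matrix.of fun j k : Fin n =>
      K (x j) (x k) - (α : ℂ) * (starRingEnd ℂ) ((inner ℂ (rep (x j)) h : ℂ)) *
        (inner ℂ (rep (x k)) h : ℂ) with hM
    set w : (Fin n → ℂ) → H := fun a => ∑ k, (starRingEnd ℂ) (a k) • rep (x k) with hw
    have hww : ∀ v : Fin n → ℂ, (inner ℂ (w v) (w v) : ℂ)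
        = ∑ j, ∑ k, (starRingEnd ℂ) (v j) * K (x j) (x k) * v k := by
      intro v
      simp only [hw, sum_inner, inner_sum, inner_smul_left, inner_smul_right,
        Finset.mul_sum, Complex.conj_conj]
      refine Finset.sum_congr rfl fun j _ => Finset.sum_congr rfl fun k _ => ?_
      rw [hK]; ring
    have hwh : ∀ v : Fin n → ℂ, (inner ℂ (w v) h : ℂ)
        = ∑ k, v k * (inner ℂ (rep (x k)) h : ℂ) := by
      intro v
      simp [hw, sum_inner, inner_smul_left]
      exact Finset.sum_congr rfl fun _ _ => mul_comm _ _
    have quad : ∀ v : Fin n → ℂ,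
        dotProduct (star v) (M.mulVec v)
          = ((‖w v‖ ^ 2 - α * ‖(inner ℂ (w v) h : ℂ)‖ ^ 2 : ℝ) : ℂ) := by
      intro v
      have e1 : dotProduct (star v) (M.mulVec v)
          = (∑ j, ∑ k, (starRingEnd ℂ) (v j) * K (x j) (x k) * v k)
            - (α : ℂ) * ((starRingEnd ℂ) (∑ k, v k * (inner ℂ (rep (x k)) h : ℂ))
              * (∑ k, v k * (inner ℂ (rep (x k)) h : ℂ))) := by
        calc dotProduct (star v) (M.mulVec v)
            = ∑ j, ∑ k, (starRingEnd ℂ) (v j)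
                * ((K (x j) (x k) - (α : ℂ) * (starRingEnd ℂ) ((inner ℂ (rep (x j)) h : ℂ))
                  * (inner ℂ (rep (x k)) h : ℂ)) * v k) := by
              simp [dotProduct, Matrix.mulVec, hM, Finset.mul_sum, Complex.star_def]
          _ = (∑ j, ∑ k, (starRingEnd ℂ) (v j) * K (x j) (x k) * v k)
              - (α : ℂ) * ∑ j, ∑ k,
                  ((starRingEnd ℂ) (v j) * (starRingEnd ℂ) ((inner ℂ (rep (x j)) h : ℂ)))
                    * (v k * (inner ℂ (rep (x k)) h : ℂ)) := by
              rw [Finset.mul_sum, ← Finset.sum_sub_distrib]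
              refine Finset.sum_congr rfl fun j _ => ?_
              rw [Finset.mul_sum, ← Finset.sum_sub_distrib]
              exact Finset.sum_congr rfl fun k _ => by ring
          _ = _ := by
              simp only [map_sum, map_mul, Finset.sum_mul_sum]
      have h1 : (inner ℂ (w v) (w v) : ℂ) = ((‖w v‖ : ℝ) : ℂ) ^ 2 :=
        inner_self_eq_norm_sq_to_K (w v)
      have h2 : (starRingEnd ℂ) (inner ℂ (w v) h : ℂ) * (inner ℂ (w v) h : ℂ)
          = ((‖(inner ℂ (w v) h : ℂ)‖ : ℝ) : ℂ) ^ 2 := RCLike.conj_mul _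
      rw [e1, ← hww v, ← hwh v, h1, h2]
      push_cast
      ring
    have herm : M.IsHermitian := by
      ext j k
      simp only [hM, Matrix.conjTranspose_apply, Matrix.of_apply, star_sub, star_mul,
        Complex.star_def, map_mul, inner_conj_symm, Complex.conj_conj, Complex.conj_ofReal, hK]
      ring
    have psd_iff : M.PosSemidef ↔
        ∀ v : Fin n → ℂ, α * ‖(inner ℂ (w v) h : ℂ)‖ ^ 2 ≤ ‖w v‖ ^ 2 := by
      rw [Matrix.posSemidef_iff_dotProduct_mulVec]
      constructor
      · rintro ⟨_, hq⟩ v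
        have hv := hq v
        rw [quad v, Complex.zero_le_real] at hv
        linarith
      · intro hv
        refine ⟨herm, fun v => ?_⟩
        rw [quad v, Complex.zero_le_real]
        linarith [hv v]
    rw [psd_iff]
    have qrw : ∀ a : Fin n → ℂ,
        (‖h‖ ^ 2 - 1 / α ≤ ‖w a - h‖ ^ 2) ↔
          (0 ≤ ‖w a‖ ^ 2 - 2 * Complex.re (inner ℂ (w a) h : ℂ) + 1 / α) := by
      intro a
      have nsq : ‖w a - h‖ ^ 2
          = ‖w a‖ ^ 2 - 2 * Complex.re (inner ℂ (w a) h : ℂ) + ‖h‖ ^ 2 :=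
        norm_sub_sq (𝕜 := ℂ) (w a) h
      rw [nsq]
      constructor <;> intro <;> linarith
    constructor
    · intro hq v
      have hq' : ∀ a : Fin n → ℂ, ‖h‖ ^ 2 - 1 / α ≤ ‖w a - h‖ ^ 2 := fun a => hq a
      by_cases hN : ‖w v‖ = 0
      · have hz : w v = 0 := norm_eq_zero.mp hN
        simp [hz, hN]
      · have hNpos : (0 : ℝ) < ‖w v‖ := lt_of_le_of_ne (norm_nonneg _) (Ne.symm hN)
        have hN2 : (0 : ℝ) < ‖w v‖ ^ 2 := by positivity
        set c : ℂ := (inner ℂ (w v) h : ℂ) with hc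
        set z : ℂ := (starRingEnd ℂ) c / ((‖w v‖ : ℂ) ^ 2) with hz
        have hwz : w (fun k => z * v k) = (starRingEnd ℂ) z • w v := by
          simp [hw, Finset.smul_sum, mul_smul, map_mul]
        have hthis := (qrw (fun k => z * v k)).mp (hq' _)
        rw [hwz] at hthis
        have hn1 : ‖(starRingEnd ℂ) z • w v‖ ^ 2 = ‖z‖ ^ 2 * ‖w v‖ ^ 2 := by
          rw [norm_smul]; simp [mul_pow]
        have hn2 : (inner ℂ ((starRingEnd ℂ) z • w v) h : ℂ) = z * c := by
          rw [inner_smul_left]; simp [hc]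
        rw [hn1, hn2] at hthis
        have h2c : (starRingEnd ℂ) c * c = ((‖c‖ : ℝ) : ℂ) ^ 2 := RCLike.conj_mul c
        have hzc : z * c = ((‖c‖ ^ 2 / ‖w v‖ ^ 2 : ℝ) : ℂ) := by
          rw [hz, div_mul_eq_mul_div, h2c]
          push_cast
          ring
        have hre : Complex.re (z * c) = ‖c‖ ^ 2 / ‖w v‖ ^ 2 := by
          rw [hzc]; exact Complex.ofReal_re _
        have hnz : ‖z‖ ^ 2 = ‖c‖ ^ 2 / (‖w v‖ ^ 2) ^ 2 := by
          rw [hz, norm_div]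
          simp [div_pow]
        rw [hre, hnz] at hthis
        have e : ‖c‖ ^ 2 / (‖w v‖ ^ 2) ^ 2 * ‖w v‖ ^ 2 = ‖c‖ ^ 2 / ‖w v‖ ^ 2 := by
          field_simp
        rw [e] at hthis
        have hle : ‖c‖ ^ 2 / ‖w v‖ ^ 2 ≤ 1 / α := by linarith
        have := (div_le_div_iff₀ hN2 hα).mp hle
        linarith
    · intro hv a
      show ‖h‖ ^ 2 - 1 / α ≤ ‖w a - h‖ ^ 2
      rw [qrw a]
      have h1 := hv a
      have h2 : Complex.re (inner ℂ (w a) h : ℂ) ≤ ‖(inner ℂ (w a) h : ℂ)‖ :=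
        by exact Complex.re_le_norm _
      have hinv : α * (1 / α) = 1 := by field_simp
      nlinarith [sq_nonneg (α * ‖(inner ℂ (w a) h : ℂ)‖ - 1), hα, h1, h2, hinv,
        norm_nonneg (inner ℂ (w a) h : ℂ)]
  have bdd1 : ∀ x : Fin n → D, BddBelow (Set.range fun a : Fin n → ℂ =>
      ‖(∑ k, (starRingEnd ℂ) (a k) • rep (x k)) - h‖ ^ 2) := by
    intro x
    exact ⟨0, by rintro y ⟨a, rfl⟩; positivity⟩
  rw [le_ciInf_iff ⟨0, by rintro y ⟨x, rfl⟩; exact Real.iInf_nonneg fun a => by positivity⟩]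
  refine forall_congr' fun x => ?_
  rw [le_ciInf_iff (bdd1 x)]
  exact key x
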